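/- In the joint-density setup for (U, W, A): assume W ⟂ A | U holds in density form, pU(u) > 0 for μ-almost every u, and pUA(u,a) > 0 for (μ⊗α)-almost every (u,a). Then for (ν⊗α⊗α)-almost every (w, a, a'): ∫ (pUA(u,a')/pUA(u,a)) · h(u,w,a) dμ(u) = pWA(w,a'). Equivalently, p(W,a')/p(W,a) = E[ p(U,a')/p(U,a) | W, A = a ]. -/

import Mathlib

open MeasureTheory

lemma qmp_prod_right {α β γ : Type*} [MeasurableSpace α] [MeasurableSpace β] [MeasurableSpace γ]
    {μa : Measure α} {μb : Measure β} {μc : Measure γ} [SFinite μa] [SFinite μb] [SFinite μc]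
    {g : β → γ} (hg : Measure.QuasiMeasurePreserving g μb μc) :
    Measure.QuasiMeasurePreserving (Prod.map (id : α → α) g) (μa.prod μb) (μa.prod μc) := by
  refine ⟨measurable_id.prodMap hg.measurable, ?_⟩
  rw [← Measure.map_prod_map μa μb measurable_id hg.measurable, Measure.map_id]
  exact Measure.AbsolutelyContinuous.prod (Measure.AbsolutelyContinuous.refl _)
    hg.absolutelyContinuous

/-- Key ATT identity: with joint density `h` of `(U, W, A)` satisfying
`W ⟂ A | U` in density form and positivity of `pU` and `pUA`, for `(ν⊗α⊗α)`-a.e. `(w, a, a')`: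
`∫ (pUA(u,a')/pUA(u,a)) · h(u,w,a) dμ(u) = pWA(w,a')`, i.e.
`p(W,a')/p(W,a) = E[p(U,a')/p(U,a) | W, A = a]`. -/
theorem density_ratio_conversion_att
    {U W A : Type*} [MeasurableSpace U] [MeasurableSpace W] [MeasurableSpace A]
    (μ : Measure U) (ν : Measure W) (α : Measure A)
    [SigmaFinite μ] [SigmaFinite ν] [SigmaFinite α]
    (h : U × W × A → ℝ) (h_meas : Measurable h) (h_nonneg : ∀ x, 0 ≤ h x)
    (h_int : Integrable h (μ.prod (ν.prod α)))
    (pU : U → ℝ) (hpU : ∀ u, pU u = ∫ a, ∫ w, h (u, w, a) ∂ν ∂α)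
    (pUW : U × W → ℝ) (hpUW : ∀ u w, pUW (u, w) = ∫ a, h (u, w, a) ∂α)
    (pUA : U × A → ℝ) (hpUA : ∀ u a, pUA (u, a) = ∫ w, h (u, w, a) ∂ν)
    (pWA : W × A → ℝ) (hpWA : ∀ w a, pWA (w, a) = ∫ u, h (u, w, a) ∂μ)
    (ci : ∀ᵐ x ∂μ.prod (ν.prod α), h x * pU x.1 = pUW (x.1, x.2.1) * pUA (x.1, x.2.2))
    (hpU_pos : ∀ᵐ u ∂μ, 0 < pU u)
    (hpUA_pos : ∀ᵐ x ∂μ.prod α, 0 < pUA x) :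
    ∀ᵐ x ∂ν.prod (α.prod α),
      ∫ u, (pUA (u, x.2.2) / pUA (u, x.2.1)) * h (u, x.1, x.2.1) ∂μ = pWA (x.1, x.2.2) := by
  -- the big measure
  set M : Measure ((W × (A × A)) × U) := (ν.prod (α.prod α)).prod μ with hM
  have hswap : Measure.QuasiMeasurePreserving (Prod.swap : (W × (A × A)) × U → U × (W × (A × A)))
      M (μ.prod (ν.prod (α.prod α))) :=
    Measure.measurePreserving_swap.quasiMeasurePreserving
  -- transport ci at (u, w, a)
  have q1 : Measure.QuasiMeasurePreserving
      (fun z : (W × (A × A)) × U => (z.2, (z.1.1, z.1.2.1))) M (μ.prod (ν.prod α)) := by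
    have : Measure.QuasiMeasurePreserving
        (Prod.map (id : U → U) (Prod.map (id : W → W) (Prod.fst : A × A → A)))
        (μ.prod (ν.prod (α.prod α))) (μ.prod (ν.prod α)) :=
      qmp_prod_right (qmp_prod_right Measure.quasiMeasurePreserving_fst)
    exact this.comp hswap
  have q2 : Measure.QuasiMeasurePreserving
      (fun z : (W × (A × A)) × U => (z.2, (z.1.1, z.1.2.2))) M (μ.prod (ν.prod α)) := by
    have : Measure.QuasiMeasurePreserving
        (Prod.map (id : U → U) (Prod.map (id : W → W) (Prod.snd : A × A → A)))
        (μ.prod (ν.prod (α.prod α))) (μ.prod (ν.prod α)) :=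
      qmp_prod_right (qmp_prod_right Measure.quasiMeasurePreserving_snd)
    exact this.comp hswap
  have q3 : Measure.QuasiMeasurePreserving
      (fun z : (W × (A × A)) × U => z.2) M μ := Measure.quasiMeasurePreserving_snd
  have q4 : Measure.QuasiMeasurePreserving
      (fun z : (W × (A × A)) × U => (z.2, z.1.2.1)) M (μ.prod α) := by
    have h1 : Measure.QuasiMeasurePreserving
        (Prod.map (id : U → U) (fun p : W × (A × A) => p.2.1))
        (μ.prod (ν.prod (α.prod α))) (μ.prod α) :=
      qmp_prod_right (Measure.quasiMeasurePreserving_fst.comp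
        Measure.quasiMeasurePreserving_snd)
    exact h1.comp hswap
  have e1 := q1.ae ci
  have e2 := q2.ae ci
  have e3 := q3.ae hpU_pos
  have e4 := q4.ae hpUA_pos
  -- pointwise identity on M
  have key : ∀ᵐ z ∂M,
      (pUA (z.2, z.1.2.2) / pUA (z.2, z.1.2.1)) * h (z.2, z.1.1, z.1.2.1)
        = h (z.2, z.1.1, z.1.2.2) := by
    filter_upwards [e1, e2, e3, e4] with z h1 h2 h3 h4
    have hcancel : pUA (z.2, z.1.2.2) * h (z.2, z.1.1, z.1.2.1)
        = h (z.2, z.1.1, z.1.2.2) * pUA (z.2, z.1.2.1) := by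
      have : (pUA (z.2, z.1.2.2) * h (z.2, z.1.1, z.1.2.1)) * pU z.2
          = (h (z.2, z.1.1, z.1.2.2) * pUA (z.2, z.1.2.1)) * pU z.2 := by
        linear_combination pUA (z.2, z.1.2.2) * h1 - pUA (z.2, z.1.2.1) * h2
      exact mul_right_cancel₀ (ne_of_gt h3) this
    field_simp
    linear_combination hcancel
  -- slice it
  have key2 := Measure.ae_ae_of_ae_prod key
  filter_upwards [key2] with x hx
  rw [hpWA]
  exact integral_congr_ae hx
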